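/- Let (A,B,C,D) be a linear system satisfying the input-output Hamiltonian relations with respect to a signature matrix σ and an invertible skew-symmetric Ω: AᵀΩ + ΩA = 0, BᵀΩ = σC, σD = Dᵀσ. Let (x₁,u₁,y₁) and (x₂,u₂,y₂) be two trajectories, i.e., xᵢ : ℝ → ℝⁿ differentiable with xᵢ'(t) = Axᵢ(t) + Buᵢ(t) and yᵢ(t) = Cxᵢ(t) + Duᵢ(t). Then for every t, the function t ↦ x₂(t)ᵀΩx₁(t) is differentiable with derivative u₂(t)ᵀσy₁(t) − y₂(t)ᵀσu₁(t). -/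

import Mathlib

open Matrix

private lemma aux_dot {n : ℕ} {f g : ℝ → Fin n → ℝ} {f' g' : Fin n → ℝ} {t : ℝ}
    (hf : HasDerivAt f f' t) (hg : HasDerivAt g g' t) :
    HasDerivAt (fun s => f s ⬝ᵥ g s) (f' ⬝ᵥ g t + f t ⬝ᵥ g') t := by
  simp only [dotProduct]
  rw [← Finset.sum_add_distrib]
  exact HasDerivAt.fun_sum fun i _ =>
    ((hasDerivAt_pi.mp hf i).mul (hasDerivAt_pi.mp hg i))

private lemma aux_mulVec {n k : ℕ} {x : ℝ → Fin n → ℝ} {x' : Fin n → ℝ} {t : ℝ}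
    (M : Matrix (Fin k) (Fin n) ℝ) (h : HasDerivAt x x' t) :
    HasDerivAt (fun s => M *ᵥ x s) (M *ᵥ x') t := by
  refine hasDerivAt_pi.2 fun i => ?_
  simpa [mulVec, dotProduct] using
    HasDerivAt.fun_sum fun j (_ : j ∈ Finset.univ) =>
      (hasDerivAt_pi.1 h j).const_mul (M i j)

private lemma aux_dmt {k l : ℕ} (M : Matrix (Fin k) (Fin l) ℝ) (v : Fin l → ℝ)
    (w : Fin k → ℝ) : (M *ᵥ v) ⬝ᵥ w = v ⬝ᵥ (Mᵀ *ᵥ w) := by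
  rw [dotProduct_mulVec, vecMul_transpose]

/-- Defining identity of input-output Hamiltonian systems: for any two trajectories
`(x₁,u₁,y₁)` and `(x₂,u₂,y₂)`, `d/dt (x₂ᵀ Ω x₁) = u₂ᵀ σ y₁ - y₂ᵀ σ u₁`. -/
theorem ioHamiltonian_defining_identity {n m : ℕ}
    (A : Matrix (Fin n) (Fin n) ℝ) (B : Matrix (Fin n) (Fin m) ℝ)
    (C : Matrix (Fin m) (Fin n) ℝ) (D : Matrix (Fin m) (Fin m) ℝ)
    (σ : Matrix (Fin m) (Fin m) ℝ) (hσdiag : σ.IsDiag)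
    (hσsign : ∀ i, σ i i = 1 ∨ σ i i = -1)
    (Ω : Matrix (Fin n) (Fin n) ℝ) (hΩskew : Ωᵀ = -Ω) (hΩinv : IsUnit Ω)
    (hham1 : Aᵀ * Ω + Ω * A = 0) (hham2 : Bᵀ * Ω = σ * C) (hham3 : σ * D = Dᵀ * σ)
    (x₁ x₂ : ℝ → Fin n → ℝ) (u₁ u₂ : ℝ → Fin m → ℝ) (y₁ y₂ : ℝ → Fin m → ℝ)
    (hx₁ : ∀ t, HasDerivAt x₁ (A *ᵥ x₁ t + B *ᵥ u₁ t) t)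
    (hx₂ : ∀ t, HasDerivAt x₂ (A *ᵥ x₂ t + B *ᵥ u₂ t) t)
    (hy₁ : ∀ t, y₁ t = C *ᵥ x₁ t + D *ᵥ u₁ t)
    (hy₂ : ∀ t, y₂ t = C *ᵥ x₂ t + D *ᵥ u₂ t) :
    ∀ t, HasDerivAt (fun s => x₂ s ⬝ᵥ (Ω *ᵥ x₁ s))
      (u₂ t ⬝ᵥ (σ *ᵥ y₁ t) - y₂ t ⬝ᵥ (σ *ᵥ u₁ t)) t := by
  intro t
  have hσ : σᵀ = σ := hσdiag.isSymm
  have hΩB : Ω * B = -(Cᵀ * σ) := by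
    have h := congrArg Matrix.transpose hham2
    rw [transpose_mul, transpose_mul, transpose_transpose, hΩskew, hσ] at h
    exact neg_eq_iff_eq_neg.mp ((Matrix.neg_mul Ω B).symm.trans h)
  have key := aux_dot (hx₂ t) (aux_mulVec Ω (hx₁ t))
  convert key using 1
  set p := x₁ t; set q := x₂ t; set a := u₁ t; set b := u₂ t
  have h1 : q ⬝ᵥ ((Aᵀ * Ω) *ᵥ p) + q ⬝ᵥ ((Ω * A) *ᵥ p) = 0 := by
    rw [← dotProduct_add, ← add_mulVec, hham1]
    simp
  have h2 : b ⬝ᵥ ((Bᵀ * Ω) *ᵥ p) = b ⬝ᵥ ((σ * C) *ᵥ p) := by rw [hham2]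
  have h3 : q ⬝ᵥ ((Ω * B) *ᵥ a) = -(q ⬝ᵥ ((Cᵀ * σ) *ᵥ a)) := by
    rw [hΩB, neg_mulVec, dotProduct_neg]
  have h4 : b ⬝ᵥ ((σ * D) *ᵥ a) = b ⬝ᵥ ((Dᵀ * σ) *ᵥ a) := by rw [hham3]
  rw [hy₁, hy₂]
  simp only [mulVec_add, add_dotProduct, dotProduct_add, aux_dmt, mulVec_mulVec,
    transpose_transpose]
  linarith [h1, h2, h3, h4]
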